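/- The level 2 congruence subgroup GL_2(n, ℤ) cannot be generated by fewer than n² elements. -/

import Mathlib

def level2 (n : ℕ) : Subgroup (GL (Fin n) ℤ) :=
  (Matrix.GeneralLinearGroup.map (n := Fin n) (Int.castRingHom (ZMod 2))).ker

open Matrix

/-- "division by 2" map on the level 2 subgroup. -/
def dmap (n : ℕ) (g : GL (Fin n) ℤ) : Matrix (Fin n) (Fin n) (ZMod 2) :=
  fun i j => ((((g : Matrix (Fin n) (Fin n) ℤ) - 1) i j / 2 : ℤ) : ZMod 2)

lemma mem_level2_iff {n : ℕ} {g : GL (Fin n) ℤ} :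
    g ∈ level2 n ↔ ∀ i j, (2:ℤ) ∣ (((g : Matrix (Fin n) (Fin n) ℤ) - 1) i j) := by
  have key : g ∈ level2 n ↔
      (g : Matrix (Fin n) (Fin n) ℤ).map (Int.castRingHom (ZMod 2)) =
        (1 : Matrix (Fin n) (Fin n) (ZMod 2)) := by
    rw [level2, MonoidHom.mem_ker, Units.ext_iff]
    rfl
  rw [key]
  constructor
  · intro h i j
    have h2 := congrFun (congrFun h i) j
    simp only [Matrix.map_apply, Matrix.one_apply, Int.coe_castRingHom] at h2
    have : ((((g : Matrix (Fin n) (Fin n) ℤ) - 1) i j : ℤ) : ZMod 2) = 0 := by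
      rw [Matrix.sub_apply, Matrix.one_apply]
      push_cast
      rw [h2]
      split <;> simp
    exact (ZMod.intCast_zmod_eq_zero_iff_dvd _ 2).mp this
  · intro h
    ext i j
    have := (ZMod.intCast_zmod_eq_zero_iff_dvd _ 2).mpr (h i j)
    simp only [Matrix.sub_apply] at this
    push_cast at this
    simp only [Matrix.map_apply, Matrix.one_apply, Int.coe_castRingHom]
    rw [sub_eq_zero] at this
    rw [this, Matrix.one_apply]
    split <;> simp

lemma dmap_mul {n : ℕ} {g h : GL (Fin n) ℤ} (hg : g ∈ level2 n) (hh : h ∈ level2 n) :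
    dmap n (g * h) = dmap n g + dmap n h := by
  rw [mem_level2_iff] at hg hh
  funext i j
  obtain ⟨a, ha⟩ := hg i j
  obtain ⟨b, hb⟩ := hh i j
  have hprod : (4:ℤ) ∣ ((((g : Matrix (Fin n) (Fin n) ℤ) - 1) *
      ((h : Matrix (Fin n) (Fin n) ℤ) - 1)) i j) := by
    rw [Matrix.mul_apply]
    refine Finset.dvd_sum fun k _ => ?_
    obtain ⟨x, hx⟩ := hg i k
    obtain ⟨y, hy⟩ := hh k j
    exact ⟨x * y, by rw [hx, hy]; ring⟩
  obtain ⟨c, hc⟩ := hprod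
  have hgh : (((g * h : GL (Fin n) ℤ) : Matrix (Fin n) (Fin n) ℤ) - 1) i j
      = 2 * (2 * c + a + b) := by
    have e : ((g * h : GL (Fin n) ℤ) : Matrix (Fin n) (Fin n) ℤ) - 1
        = ((g : Matrix (Fin n) (Fin n) ℤ) - 1) * ((h : Matrix (Fin n) (Fin n) ℤ) - 1)
          + ((g : Matrix (Fin n) (Fin n) ℤ) - 1) + ((h : Matrix (Fin n) (Fin n) ℤ) - 1) := by
      have : ((g * h : GL (Fin n) ℤ) : Matrix (Fin n) (Fin n) ℤ)
          = (g : Matrix (Fin n) (Fin n) ℤ) * (h : Matrix (Fin n) (Fin n) ℤ) := rfl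
      rw [this]; noncomm_ring
    rw [e]
    simp only [Matrix.add_apply, hc, ha, hb]
    ring
  simp only [dmap, Matrix.add_apply] at *
  rw [hgh, ha, hb, Int.mul_ediv_cancel_left _ (by norm_num),
    Int.mul_ediv_cancel_left _ (by norm_num), Int.mul_ediv_cancel_left _ (by norm_num)]
  push_cast
  have h2 : (2 : ZMod 2) = 0 := by decide
  rw [h2]
  ring

lemma dmap_one {n : ℕ} : dmap n 1 = 0 := by
  funext i j
  simp [dmap]

lemma dmap_mem_closure {n : ℕ} (S : Finset (GL (Fin n) ℤ))
    (hS : Subgroup.closure (S : Set (GL (Fin n) ℤ)) = level2 n)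
    {g : GL (Fin n) ℤ} (hg : g ∈ level2 n) :
    dmap n g ∈ AddSubgroup.closure ((S.image (dmap n) : Finset _) : Set (Matrix (Fin n) (Fin n) (ZMod 2))) := by
  rw [← hS] at hg
  induction hg using Subgroup.closure_induction with
  | mem x hx =>
      exact AddSubgroup.subset_closure (by simpa using Finset.mem_image_of_mem _ hx)
  | one => rw [dmap_one]; exact zero_mem _
  | mul x y hx hy ihx ihy =>
      have hx' : x ∈ level2 n := hS ▸ hx
      have hy' : y ∈ level2 n := hS ▸ hy
      rw [dmap_mul hx' hy']
      exact add_mem ihx ihy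
  | inv x hx ihx =>
      have hx' : x ∈ level2 n := hS ▸ hx
      have hxi : x⁻¹ ∈ level2 n := inv_mem hx'
      have : dmap n x⁻¹ + dmap n x = 0 := by
        rw [← dmap_mul hxi hx', inv_mul_cancel, dmap_one]
      have hEq : dmap n x⁻¹ = -dmap n x := by linear_combination (norm := abel) this
      rw [hEq]
      exact neg_mem ihx

lemma exists_gen {n : ℕ} (i j : Fin n) :
    ∃ g ∈ level2 n, dmap n g = single i j (1 : ZMod 2) := by
  by_cases hij : i = j
  · subst hij
    -- use 1 - 2 E_{ii}, self inverse
    set M : Matrix (Fin n) (Fin n) ℤ := 1 + single i i (-2) with hM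
    have hMM : M * M = 1 := by
      rw [hM]
      rw [mul_add, add_mul, add_mul, Matrix.one_mul, Matrix.one_mul, Matrix.mul_one,
        Matrix.single_mul_single_same, add_assoc, ← Matrix.single_add,
        ← Matrix.single_add]
      norm_num
    refine ⟨⟨M, M, hMM, hMM⟩, ?_, ?_⟩
    · rw [mem_level2_iff]
      intro a b
      show (2:ℤ) ∣ ((M - 1) a b)
      rw [hM]
      simp only [add_sub_cancel_left, Matrix.single, Matrix.of_apply]
      split <;> norm_num
    · funext a b
      show ((((M - 1) a b) / 2 : ℤ) : ZMod 2) = _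
      rw [hM]
      simp only [add_sub_cancel_left, Matrix.single, Matrix.of_apply]
      split <;> simp <;> decide
  · set M : Matrix (Fin n) (Fin n) ℤ := 1 + single i j 2 with hM
    set N : Matrix (Fin n) (Fin n) ℤ := 1 + single i j (-2) with hN
    have hEE : single i j (2:ℤ) * single i j (-2) = 0 :=
      Matrix.single_mul_single_of_ne (c := 2) i j i (Ne.symm hij) (-2)
    have hEE' : single i j (-2:ℤ) * single i j 2 = 0 :=
      Matrix.single_mul_single_of_ne (c := -2) i j i (Ne.symm hij) 2
    have hMN : M * N = 1 := by
      rw [hM, hN, mul_add, add_mul, add_mul, Matrix.one_mul, Matrix.one_mul,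
        Matrix.mul_one, hEE, add_zero, add_assoc, ← Matrix.single_add]
      norm_num
    have hNM : N * M = 1 := by
      rw [hM, hN, mul_add, add_mul, add_mul, Matrix.one_mul, Matrix.one_mul,
        Matrix.mul_one, hEE', add_zero, add_assoc, ← Matrix.single_add]
      norm_num
    refine ⟨⟨M, N, hMN, hNM⟩, ?_, ?_⟩
    · rw [mem_level2_iff]
      intro a b
      show (2:ℤ) ∣ ((M - 1) a b)
      rw [hM]
      simp only [add_sub_cancel_left, Matrix.single, Matrix.of_apply]
      split <;> norm_num
    · funext a b
      show ((((M - 1) a b) / 2 : ℤ) : ZMod 2) = _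
      rw [hM]
      simp only [add_sub_cancel_left, Matrix.single, Matrix.of_apply]
      split <;> simp

/-- The level 2 congruence subgroup of `GL(n, ℤ)` cannot be generated by
fewer than `n²` elements. -/
theorem stmt_3 (n : ℕ) (hn : 1 ≤ n) (S : Finset (GL (Fin n) ℤ))
    (hS : Subgroup.closure (S : Set (GL (Fin n) ℤ)) = level2 n) :
    n ^ 2 ≤ S.card := by
  classical
  set T : Finset (Matrix (Fin n) (Fin n) (ZMod 2)) := S.image (dmap n) with hT
  have hcl : AddSubgroup.closure (T : Set (Matrix (Fin n) (Fin n) (ZMod 2)))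
      ≤ (Submodule.span (ZMod 2) (T : Set (Matrix (Fin n) (Fin n) (ZMod 2)))).toAddSubgroup :=
    (AddSubgroup.closure_le _).mpr Submodule.subset_span
  have hstd : ∀ i j, single i j (1 : ZMod 2) ∈
      Submodule.span (ZMod 2) (T : Set (Matrix (Fin n) (Fin n) (ZMod 2))) := by
    intro i j
    obtain ⟨g, hg, hdg⟩ := exists_gen i j
    have := dmap_mem_closure S hS hg
    rw [hdg] at this
    exact hcl this
  have hTtop : Submodule.span (ZMod 2) (T : Set (Matrix (Fin n) (Fin n) (ZMod 2))) = ⊤ := by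
    rw [eq_top_iff]
    intro m _
    rw [matrix_eq_sum_single m]
    refine Submodule.sum_mem _ fun i _ => Submodule.sum_mem _ fun j _ => ?_
    have : single i j (m i j) = (m i j) • single i j (1 : ZMod 2) := by
      rw [Matrix.smul_single, smul_eq_mul, mul_one]
    rw [this]
    exact Submodule.smul_mem _ _ (hstd i j)
  have hrank : Module.finrank (ZMod 2) (Matrix (Fin n) (Fin n) (ZMod 2)) ≤ T.card := by
    have h1 := finrank_span_finset_le_card (R := ZMod 2) T
    rw [Set.finrank, hTtop, finrank_top] at h1
    exact h1
  have hm : Module.finrank (ZMod 2) (Matrix (Fin n) (Fin n) (ZMod 2)) = n ^ 2 := by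
    rw [Module.finrank_matrix]
    simp [sq]
  calc n ^ 2 = _ := hm.symm
    _ ≤ T.card := hrank
    _ ≤ S.card := Finset.card_image_le
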